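/- Let A be a pseudocompact k-algebra such that A/J²(A) is finite dimensional over k. Then: (1) for every finitely generated pseudocompact A-module U, the submodule J(A)·U is closed in U; and (2) for every natural number n, the ideal Jⁿ(A) is a closed, finitely generated submodule of A. -/

import Mathlib

/-! Throughout, `k` is a perfect field regarded as a discrete topological ring.

A *pseudocompact* `k`-algebra is an associative unital Hausdorff topological `k`-algebra
which has a basis of neighbourhoods of `0` consisting of open two-sided ideals of finite
codimension intersecting in `0`, and which is the inverse limit of its quotients by these
ideals; equivalently (as encoded below) it is a complete Hausdorff topological algebra with
such a basis of open ideals. -/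

/-- The Jacobson radical of a topological algebra: the intersection of the open maximal
left ideals. -/
def openJacobson (A : Type) [Ring A] [TopologicalSpace A] : Ideal A :=
  sInf {I : Ideal A | IsOpen (I : Set A) ∧ I.IsMaximal}

/-- The Jacobson radical `J(A)`, viewed as a `k`-submodule of `A`. -/
def Jrad (k : Type) [Field k] (A : Type) [Ring A] [Algebra k A] [TopologicalSpace A] :
    Submodule k A := (openJacobson A).restrictScalars k

/-- Powers of the radical: `J⁰(A) = A`, `J¹(A) = J(A)`, `Jⁿ(A) = J(A)·Jⁿ⁻¹(A)` for `n > 1`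
(the product of two `k`-submodules being spanned by the products of their elements). -/
def Jpow (k : Type) [Field k] (A : Type) [Ring A] [Algebra k A] [TopologicalSpace A] :
    ℕ → Submodule k A
  | 0 => ⊤
  | 1 => Jrad k A
  | n + 2 => Jrad k A * Jpow k A (n + 1)

/-- `A` is a pseudocompact `k`-algebra: Hausdorff, complete, with a basis of neighbourhoods
of `0` consisting of open two-sided ideals of finite codimension over `k`.  (Hausdorffness is
equivalent to the requirement that these open ideals intersect in `0`, and completeness to
`A` being the inverse limit of its quotients by them.) -/
structure IsPseudocompactAlgebra (k : Type) [Field k] (A : Type) [Ring A] [Algebra k A]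
    [UniformSpace A] [IsUniformAddGroup A] [IsTopologicalRing A] : Prop where
  t2 : T2Space A
  complete : CompleteSpace A
  basis : ∀ s ∈ nhds (0 : A), ∃ I : Ideal A,
    (∀ x ∈ I, ∀ b : A, x * b ∈ I) ∧ IsOpen (I : Set A) ∧
    FiniteDimensional k (A ⧸ I.restrictScalars k) ∧ (I : Set A) ⊆ s

/-- `V` is a pseudocompact `A`-module: Hausdorff, complete, with a basis of neighbourhoods
of `0` consisting of open submodules of finite codimension over `k`. -/
structure IsPseudocompactModule (k : Type) [Field k] (A : Type) [Ring A] [Algebra k A]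
    (V : Type) [AddCommGroup V] [Module k V] [Module A V] [IsScalarTower k A V]
    [UniformSpace V] [IsUniformAddGroup V] : Prop where
  t2 : T2Space V
  complete : CompleteSpace V
  basis : ∀ s ∈ nhds (0 : V), ∃ p : Submodule A V,
    IsOpen (p : Set V) ∧ FiniteDimensional k (V ⧸ p.restrictScalars k) ∧ (p : Set V) ⊆ s

/-- A pseudocompact algebra `A` is *pointed* if `A/J(A)` is isomorphic to a finite product of
copies of `k`; equivalently, there is a surjective `k`-algebra homomorphism `A → kⁿ`
whose kernel is `J(A)`. -/
def IsPointed (k : Type) [Field k] (A : Type) [Ring A] [Algebra k A] [TopologicalSpace A] :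
    Prop :=
  ∃ (n : ℕ) (φ : A →ₐ[k] (Fin n → k)), Function.Surjective φ ∧ RingHom.ker φ = openJacobson A


open Submodule Set

variable {k : Type} [Field k]

section Coset
variable {M : Type} [AddCommGroup M] [Module k M]

/-- The coset `v + p` of a submodule. -/
def Cst (v : M) (p : Submodule k M) : Set M := {x | x - v ∈ p}

lemma mem_Cst {v x : M} {p : Submodule k M} : x ∈ Cst v p ↔ x - v ∈ p := Iff.rfl

lemma self_mem_Cst (v : M) (p : Submodule k M) : v ∈ Cst v p := by simp [mem_Cst]

lemma Cst_eq_of_mem {v w : M} {p : Submodule k M} (h : w ∈ Cst v p) : Cst v p = Cst w p := by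
  ext x
  constructor <;> intro hx
  · have := p.sub_mem hx h; simpa [mem_Cst, sub_sub_sub_cancel_right] using this
  · have := p.add_mem (show x - w ∈ p from hx) h; simpa [mem_Cst, sub_add_sub_cancel] using this

lemma Cst_dir_le {v w : M} {p q : Submodule k M} (h : Cst v p ⊆ Cst w q) : p ≤ q := by
  intro x hx
  have h1 : v + x ∈ Cst v p := by simp [mem_Cst, hx]
  have h2 : v ∈ Cst v p := self_mem_Cst v p
  have := q.sub_mem (h h1) (h h2)
  simpa [mem_Cst, add_sub_sub_cancel] using this

lemma Cst_eq_of_subset {v w : M} {p : Submodule k M} (h : Cst v p ⊆ Cst w p) :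
    Cst v p = Cst w p := by
  rw [Cst_eq_of_mem (h (self_mem_Cst v p))]

lemma Cst_inter {v w x : M} {p q : Submodule k M} (hx : x ∈ Cst v p ∩ Cst w q) :
    Cst v p ∩ Cst w q = Cst x (p ⊓ q) := by
  ext z
  simp only [Set.mem_inter_iff, mem_Cst, Submodule.mem_inf]
  obtain ⟨hx1, hx2⟩ := hx
  constructor
  · rintro ⟨h1, h2⟩
    exact ⟨by simpa [sub_sub_sub_cancel_right] using p.sub_mem h1 hx1,
           by simpa [sub_sub_sub_cancel_right] using q.sub_mem h2 hx2⟩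
  · rintro ⟨h1, h2⟩
    exact ⟨by simpa [sub_add_sub_cancel] using p.add_mem h1 hx1,
           by simpa [sub_add_sub_cancel] using q.add_mem h2 hx2⟩

/-- `s + V` as a set. -/
def addS (s : Set M) (V : Submodule k M) : Set M := {x | ∃ y ∈ s, x - y ∈ V}

lemma subset_addS (s : Set M) (V : Submodule k M) : s ⊆ addS s V :=
  fun x hx => ⟨x, hx, by simp⟩

lemma addS_mono {s t : Set M} (h : s ⊆ t) (V : Submodule k M) : addS s V ⊆ addS t V := by
  rintro x ⟨y, hy, hxy⟩; exact ⟨y, h hy, hxy⟩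

lemma addS_Cst (v : M) (p V : Submodule k M) : addS (Cst v p) V = Cst v (p ⊔ V) := by
  ext x
  simp only [addS, mem_Cst, Set.mem_setOf_eq]
  constructor
  · rintro ⟨y, hy, hxy⟩
    have : x - v = (y - v) + (x - y) := by abel
    rw [this]; exact Submodule.add_mem _ (le_sup_left (a := p) (b := V) hy)
      (le_sup_right (a := p) (b := V) hxy)
  · intro hx
    rcases Submodule.mem_sup.mp hx with ⟨a, ha, b, hb, hab⟩
    refine ⟨v + a, by simp [mem_Cst, ha], ?_⟩
    have : x - (v + a) = (x - v) - a := by abel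
    rw [this, ← hab]; simpa using hb

variable [TopologicalSpace M] [IsTopologicalAddGroup M]

lemma Cst_isClosed {v : M} {p : Submodule k M} (hp : IsClosed (p : Set M)) :
    IsClosed (Cst v p) := by
  have : Cst v p = (fun x => x - v) ⁻¹' (p : Set M) := rfl
  rw [this]; exact hp.preimage (continuous_id.sub continuous_const)

lemma Cst_isOpen {v : M} {p : Submodule k M} (hp : IsOpen (p : Set M)) :
    IsOpen (Cst v p) := by
  have : Cst v p = (fun x => x - v) ⁻¹' (p : Set M) := rfl
  rw [this]; exact hp.preimage (continuous_id.sub continuous_const)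

lemma addS_isClosed (s : Set M) {V : Submodule k M} (hV : IsOpen (V : Set M)) :
    IsClosed (addS s V) := by
  rw [← isOpen_compl_iff]
  have : (addS s V)ᶜ = ⋃ z ∈ (addS s V)ᶜ, Cst z V := by
    ext x
    simp only [Set.mem_iUnion, Set.mem_compl_iff]
    constructor
    · intro hx; exact ⟨x, hx, self_mem_Cst x V⟩
    · rintro ⟨z, hz, hxz⟩
      intro hx
      rcases hx with ⟨y, hy, hxy⟩
      refine hz ⟨y, hy, ?_⟩
      have h2 : x - z ∈ V := mem_Cst.mp hxz
      have : z - y = (x - y) - (x - z) := by abel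
      rw [this]; exact V.sub_mem hxy h2
  rw [this]
  exact isOpen_biUnion fun z _ => Cst_isOpen hV
end Coset

section Finrank
variable {M : Type} [AddCommGroup M] [Module k M]

lemma mapQ_id_surj {P Q : Submodule k M} (h : P ≤ Q) :
    Function.Surjective (Submodule.mapQ P Q LinearMap.id (by simpa using h)) := by
  intro x
  obtain ⟨y, rfl⟩ := Submodule.mkQ_surjective Q x
  exact ⟨P.mkQ y, by simp [Submodule.mapQ_apply]⟩

lemma quot_findim_of_le {P Q : Submodule k M} (h : P ≤ Q) [FiniteDimensional k (M ⧸ P)] :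
    FiniteDimensional k (M ⧸ Q) :=
  Module.Finite.of_surjective _ (mapQ_id_surj h)

lemma quot_finrank_le_of_le {P Q : Submodule k M} (h : P ≤ Q) [FiniteDimensional k (M ⧸ P)] :
    Module.finrank k (M ⧸ Q) ≤ Module.finrank k (M ⧸ P) := by
  haveI := quot_findim_of_le h
  have := LinearMap.finrank_range_le (Submodule.mapQ P Q LinearMap.id (by simpa using h))
  rwa [LinearMap.range_eq_top.mpr (mapQ_id_surj h), finrank_top] at this

lemma eq_of_le_of_finrank_quot_le {P Q : Submodule k M} (h : P ≤ Q)
    [FiniteDimensional k (M ⧸ P)]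
    (hr : Module.finrank k (M ⧸ P) ≤ Module.finrank k (M ⧸ Q)) : P = Q := by
  set f := Submodule.mapQ P Q LinearMap.id (by simpa using h) with hf
  set QP : Submodule k (M ⧸ P) := Q.map P.mkQ with hQP
  have hker : LinearMap.ker f = QP := by
    ext x
    obtain ⟨y, rfl⟩ := Submodule.mkQ_surjective P x
    simp only [LinearMap.mem_ker, hf, Submodule.mapQ_apply, LinearMap.id_coe, id_eq, hQP]
    constructor
    · intro hy
      have : y ∈ Q := by simpa [Submodule.Quotient.mk_eq_zero] using hy
      exact Submodule.mem_map_of_mem this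
    · rintro hmem
      rcases Submodule.mem_map.mp hmem with ⟨z, hz, hzy⟩
      have hyz : y - z ∈ P := by
        have h2 : P.mkQ z = P.mkQ y := hzy
        have := (Submodule.Quotient.eq P).mp h2
        simpa using P.neg_mem this
      have hyQ : y ∈ Q := by
        have hy : y = z + (y - z) := by abel
        rw [hy]; exact Q.add_mem hz (h hyz)
      simpa [Submodule.Quotient.mk_eq_zero] using hyQ
  have e : ((M ⧸ P) ⧸ LinearMap.ker f) ≃ₗ[k] M ⧸ Q :=
    LinearMap.quotKerEquivRange f ≪≫ₗ
      LinearEquiv.ofTop _ (LinearMap.range_eq_top.mpr (mapQ_id_surj h))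
  have h1 : Module.finrank k (M ⧸ Q) = Module.finrank k ((M ⧸ P) ⧸ LinearMap.ker f) :=
    e.symm.finrank_eq.symm ▸ rfl
  have h1' : Module.finrank k (M ⧸ Q) = Module.finrank k ((M ⧸ P) ⧸ QP) := by
    rw [← hker] at *
    exact e.symm.finrank_eq
  have h2 := Submodule.finrank_quotient_add_finrank QP
  have h3 : Module.finrank k ↥QP = 0 := by omega
  have h4 : QP = ⊥ := by
    haveI : FiniteDimensional k QP := FiniteDimensional.finiteDimensional_submodule QP
    exact Submodule.finrank_eq_zero.mp h3
  have hQle : Q ≤ P := by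
    intro x hx
    have : P.mkQ x ∈ QP := Submodule.mem_map_of_mem hx
    rw [h4] at this
    simpa [Submodule.Quotient.mk_eq_zero] using this
  exact le_antisymm h hQle
end Finrank

section ClosedRange
variable {M X : Type} [AddCommGroup M] [Module k M] [UniformSpace M] [IsUniformAddGroup M]
variable [AddCommGroup X] [Module k X] [TopologicalSpace X] [IsTopologicalAddGroup X]

lemma submodule_isClosed_of_isOpen {Y : Type} [AddCommGroup Y] [Module k Y]
    [TopologicalSpace Y] [IsTopologicalAddGroup Y] {p : Submodule k Y}
    (hp : IsOpen (p : Set Y)) : IsClosed (p : Set Y) := by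
  have h := addS_isClosed ({0} : Set Y) hp
  have : addS ({0} : Set Y) p = (p : Set Y) := by
    ext z; simp [addS]
  rwa [this] at h

lemma closed_range_of_pc
    (hcM : CompleteSpace M)
    (hbM : ∀ s ∈ nhds (0 : M), ∃ p : Submodule k M,
      IsOpen (p : Set M) ∧ FiniteDimensional k (M ⧸ p) ∧ (p : Set M) ⊆ s)
    (hbX : ∀ s ∈ nhds (0 : X), ∃ p : Submodule k X, IsOpen (p : Set X) ∧ (p : Set X) ⊆ s)
    (hT2 : T2Space X)
    (φ : M →ₗ[k] X) (hφ : Continuous φ) : IsClosed (Set.range φ) := by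
  haveI := hcM; haveI := hT2
  apply isClosed_of_closure_subset
  intro x hx
  -- every open-submodule coset of x meets the range
  have F1 : ∀ p : Submodule k X, IsOpen (p : Set X) → ∃ m' : M, φ m' ∈ Cst x p := by
    intro p hp
    have hnb : Cst x p ∈ nhds x := (Cst_isOpen hp).mem_nhds (self_mem_Cst x p)
    rcases mem_closure_iff_nhds.mp hx _ hnb with ⟨y, hy1, m', rfl⟩
    exact ⟨m', hy1⟩
  set CC : Set M → Prop := fun s => IsClosed s ∧ ∃ (p : Submodule k M) (v : M), s = Cst v p
    with hCC
  set C0 : Set (Set M) :=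
    {s | ∃ p : Submodule k X, IsOpen (p : Set X) ∧ s = φ ⁻¹' (Cst x p)} with hC0
  set Sig : Set (Set (Set M)) :=
    {D | C0 ⊆ D ∧ (∀ s ∈ D, CC s) ∧ ∀ s ∈ D, ∀ t ∈ D, ∃ u ∈ D, u ⊆ s ∩ t} with hSig
  -- members of C0 are closed cosets
  have hCCmem : ∀ s ∈ C0, CC s := by
    rintro s ⟨p, hp, rfl⟩
    refine ⟨(Cst_isClosed (submodule_isClosed_of_isOpen hp)).preimage hφ, p.comap φ, ?_⟩
    obtain ⟨m', hm'⟩ := F1 p hp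
    refine ⟨m', ?_⟩
    ext z
    simp only [Set.mem_preimage, mem_Cst, Submodule.mem_comap, map_sub]
    constructor
    · intro h; have := p.sub_mem h hm'; simpa [sub_sub_sub_cancel_right] using this
    · intro h; have := p.add_mem h hm'; simpa [sub_add_sub_cancel] using this
  have hC0Sig : C0 ∈ Sig := by
    refine ⟨le_refl _, hCCmem, ?_⟩
    rintro s ⟨p, hp, rfl⟩ t ⟨q, hq, rfl⟩
    refine ⟨φ ⁻¹' (Cst x (p ⊓ q)), ⟨p ⊓ q, hp.inter hq, rfl⟩, ?_⟩
    intro z hz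
    exact ⟨(Submodule.mem_inf.mp hz).1, (Submodule.mem_inf.mp hz).2⟩
  -- Zorn
  obtain ⟨D, hC0D, hDmax⟩ := zorn_subset_nonempty Sig (fun c hc hchain hcne => by
    obtain ⟨D0, hD0⟩ := hcne
    refine ⟨⋃₀ c, ⟨?_, ?_, ?_⟩, fun s hs => Set.subset_sUnion_of_mem hs⟩
    · exact le_trans (hc hD0).1 (Set.subset_sUnion_of_mem hD0)
    · rintro s ⟨E, hE, hsE⟩; exact (hc hE).2.1 s hsE
    · rintro s ⟨E, hE, hsE⟩ t ⟨E', hE', htE'⟩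
      rcases hchain.total hE hE' with h | h
      · obtain ⟨u, hu, hu2⟩ := (hc hE').2.2 s (h hsE) t htE'
        exact ⟨u, Set.mem_sUnion_of_mem hu hE', hu2⟩
      · obtain ⟨u, hu, hu2⟩ := (hc hE).2.2 s hsE t (h htE')
        exact ⟨u, Set.mem_sUnion_of_mem hu hE, hu2⟩) C0 hC0Sig
  have hDSig : D ∈ Sig := hDmax.1
  have hmaxD : ∀ E ∈ Sig, D ⊆ E → E ⊆ D := fun E hE hDE => hDmax.2 hE hDE
  obtain ⟨hC0inD, hDCC, hDdir⟩ := hDSig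
  have hDne : D.Nonempty := ⟨_, hC0inD ⟨⊤, by simpa using (isOpen_univ : IsOpen (Set.univ : Set X)), rfl⟩⟩
  -- (i) stability under fattening
  have claimI : ∀ s ∈ D, ∀ V : Submodule k M, IsOpen (V : Set M) → addS s V ∈ D := by
    intro s hs V hV
    have hECC : CC (addS s V) := by
      obtain ⟨hcl, p, v, rfl⟩ := hDCC s hs
      exact ⟨addS_isClosed _ hV, p ⊔ V, v, addS_Cst v p V⟩
    refine hmaxD (insert (addS s V) D) ⟨fun t ht => Set.mem_insert_of_mem _ (hC0inD ht),
      ?_, ?_⟩ (Set.subset_insert _ _) (Set.mem_insert _ _)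
    · rintro t (rfl | ht)
      · exact hECC
      · exact hDCC t ht
    · rintro t (rfl | ht) t' (rfl | ht')
      · exact ⟨s, Set.mem_insert_of_mem _ hs,
          fun z hz => ⟨subset_addS s V hz, subset_addS s V hz⟩⟩
      · obtain ⟨u, hu, hu2⟩ := hDdir s hs t' ht'
        exact ⟨u, Set.mem_insert_of_mem _ hu,
          fun z hz => ⟨subset_addS s V ((hu2 hz).1), (hu2 hz).2⟩⟩
      · obtain ⟨u, hu, hu2⟩ := hDdir t ht s hs
        exact ⟨u, Set.mem_insert_of_mem _ hu,
          fun z hz => ⟨(hu2 hz).1, subset_addS s V ((hu2 hz).2)⟩⟩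
      · obtain ⟨u, hu, hu2⟩ := hDdir t ht t' ht'
        exact ⟨u, Set.mem_insert_of_mem _ hu, hu2⟩
  -- (ii) small cosets belong to D
  have claimII : ∀ V : Submodule k M, IsOpen (V : Set M) → FiniteDimensional k (M ⧸ V) →
      ∃ b : M, Cst b V ∈ D := by
    intro V hV hVfd
    haveI := hVfd
    set Dn : Set ℕ := {n | ∃ s ∈ D, ∃ (p : Submodule k M) (v : M),
      s = Cst v p ∧ n = Module.finrank k (M ⧸ (p ⊔ V))} with hDn
    have hDnne : Dn.Nonempty := by
      obtain ⟨s, hs⟩ := hDne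
      obtain ⟨_, p, v, rfl⟩ := hDCC s hs
      exact ⟨Module.finrank k (M ⧸ (p ⊔ V)), Cst v p, hs, p, v, rfl, rfl⟩
    have hDnbdd : BddAbove Dn := by
      refine ⟨Module.finrank k (M ⧸ V), ?_⟩
      rintro n ⟨s, hs, p, v, rfl, rfl⟩
      exact quot_finrank_le_of_le le_sup_right
    obtain ⟨s₀, hs₀, p₀, v₀, hrep₀, hd⟩ := Nat.sSup_mem hDnne hDnbdd
    have key : ∀ s ∈ D, Cst v₀ (p₀ ⊔ V) ⊆ addS s V := by
      intro s hs
      obtain ⟨u, hu, huss⟩ := hDdir s hs s₀ hs₀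
      obtain ⟨_, pu, vu, hrepu⟩ := hDCC u hu
      have hsub : Cst vu (pu ⊔ V) ⊆ Cst v₀ (p₀ ⊔ V) := by
        rw [← addS_Cst, ← addS_Cst, ← hrepu, ← hrep₀]
        exact addS_mono (fun z hz => (huss hz).2) V
      have hle : pu ⊔ V ≤ p₀ ⊔ V := Cst_dir_le hsub
      haveI : FiniteDimensional k (M ⧸ (pu ⊔ V)) :=
        quot_findim_of_le (le_sup_right : V ≤ pu ⊔ V)
      have h1 : Module.finrank k (M ⧸ (pu ⊔ V)) ≤ sSup Dn :=
        le_csSup hDnbdd ⟨u, hu, pu, vu, hrepu, rfl⟩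
      have h2 : sSup Dn ≤ Module.finrank k (M ⧸ (pu ⊔ V)) := by
        rw [hd]; exact quot_finrank_le_of_le hle
      have heq : pu ⊔ V = p₀ ⊔ V :=
        eq_of_le_of_finrank_quot_le hle (le_antisymm h1 h2 ▸ hd ▸ le_of_eq rfl)
      rw [heq] at hsub
      have : Cst vu (p₀ ⊔ V) = Cst v₀ (p₀ ⊔ V) := Cst_eq_of_subset hsub
      rw [← this, ← heq, ← addS_Cst, ← hrepu]
      exact addS_mono (fun z hz => (huss hz).1) V
    -- b := v₀ works
    refine ⟨v₀, ?_⟩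
    have hbmem : ∀ s ∈ D, ∃ y ∈ s, v₀ - y ∈ V := by
      intro s hs
      exact key s hs (self_mem_Cst v₀ (p₀ ⊔ V))
    -- extend D by Cst v₀ V and its intersections
    set E : Set (Set M) := insert (Cst v₀ V) (D ∪ {t | ∃ s ∈ D, t = Cst v₀ V ∩ s}) with hE
    have hinterCC : ∀ s ∈ D, CC (Cst v₀ V ∩ s) := by
      intro s hs
      obtain ⟨hcl, p, v, hrep⟩ := hDCC s hs
      obtain ⟨y, hy, hyV⟩ := hbmem s hs
      have hyb : y ∈ Cst v₀ V := by
        simpa [mem_Cst] using V.neg_mem hyV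
      have : Cst v₀ V ∩ s = Cst y (V ⊓ p) := by
        rw [hrep]; exact Cst_inter ⟨hyb, hrep ▸ hy⟩
      refine ⟨?_, V ⊓ p, y, this⟩
      rw [this] at *
      have hclp : IsClosed ((V ⊓ p : Submodule k M) : Set M) := by
        have h1 : ((V ⊓ p : Submodule k M) : Set M) = (V : Set M) ∩ (p : Set M) := rfl
        rw [h1]
        refine (submodule_isClosed_of_isOpen hV).inter ?_
        have : IsClosed (Cst v p) := hrep ▸ hcl
        have h2 : (p : Set M) = (fun z => z + v) ⁻¹' (Cst v p) := by
          ext z; simp [mem_Cst]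
        rw [h2]; exact this.preimage (continuous_id.add continuous_const)
      exact Cst_isClosed hclp
    -- each element of E contains Cst v₀ V ∩ s for some s ∈ D
    have hcore : ∀ t ∈ E, ∃ s ∈ D, Cst v₀ V ∩ s ⊆ t := by
      rintro t (rfl | ht | ⟨s, hs, rfl⟩)
      · obtain ⟨s, hs⟩ := hDne
        exact ⟨s, hs, Set.inter_subset_left⟩
      · exact ⟨t, ht, Set.inter_subset_right⟩
      · exact ⟨s, hs, le_refl _⟩
    have hESig : E ∈ Sig := by
      refine ⟨fun t ht => Set.mem_insert_of_mem _ (Set.mem_union_left _ (hC0inD ht)), ?_, ?_⟩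
      · rintro t (rfl | ht | ⟨s, hs, rfl⟩)
        · exact ⟨Cst_isClosed (submodule_isClosed_of_isOpen hV), V, v₀, rfl⟩
        · exact hDCC t ht
        · exact hinterCC s hs
      · intro t ht t' ht'
        obtain ⟨s, hs, hts⟩ := hcore t ht
        obtain ⟨s', hs', hts'⟩ := hcore t' ht'
        obtain ⟨w, hw, hwss⟩ := hDdir s hs s' hs'
        refine ⟨Cst v₀ V ∩ w, Set.mem_insert_of_mem _ (Set.mem_union_right _ ⟨w, hw, rfl⟩), ?_⟩
        intro z hz
        exact ⟨hts ⟨hz.1, (hwss hz.2).1⟩, hts' ⟨hz.1, (hwss hz.2).2⟩⟩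
    exact hmaxD E hESig (fun t ht => Set.mem_insert_of_mem _ (Set.mem_union_left _ ht))
      (Set.mem_insert _ _)
  -- build the Cauchy filter
  set F : Filter M := ⨅ s ∈ D, Filter.principal s with hF
  have hdir : DirectedOn ((fun s => Filter.principal s) ⁻¹'o fun x1 x2 => x1 ≥ x2) D := by
    rintro s hs t ht
    obtain ⟨u, hu, hu2⟩ := hDdir s hs t ht
    exact ⟨u, hu, Filter.principal_mono.mpr (fun z hz => (hu2 hz).1),
      Filter.principal_mono.mpr (fun z hz => (hu2 hz).2)⟩
  have memF : ∀ {t : Set M}, t ∈ F ↔ ∃ s ∈ D, s ⊆ t := by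
    intro t
    rw [hF, Filter.mem_biInf_of_directed hdir hDne]
    simp [Filter.mem_principal]
  have hne : F.NeBot := by
    rw [Filter.neBot_iff]
    intro h
    have : (∅ : Set M) ∈ F := h ▸ Filter.mem_bot
    obtain ⟨s, hs, hsub⟩ := memF.mp this
    obtain ⟨_, p, v, rfl⟩ := hDCC s hs
    exact hsub (self_mem_Cst v p)
  have hcauchy : Cauchy F := by
    refine cauchy_iff.mpr ⟨hne, ?_⟩
    intro Us hUs
    rw [uniformity_eq_comap_nhds_zero M] at hUs
    obtain ⟨N, hN, hpre⟩ := Filter.mem_comap.mp hUs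
    obtain ⟨V, hVopen, hVfd, hVN⟩ := hbM N hN
    obtain ⟨b, hb⟩ := claimII V hVopen hVfd
    refine ⟨Cst b V, memF.mpr ⟨Cst b V, hb, le_refl _⟩, ?_⟩
    rintro ⟨z, w⟩ ⟨hz, hw⟩
    apply hpre
    have : w - z = (w - b) - (z - b) := by abel
    exact Set.mem_preimage.mpr (hVN (this ▸ V.sub_mem hw hz))
  obtain ⟨m, hm⟩ := CompleteSpace.complete hcauchy
  have hmem : ∀ s ∈ D, m ∈ s := by
    intro s hs
    obtain ⟨hcl, p, v, hrep⟩ := hDCC s hs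
    rw [← hcl.closure_eq]
    rw [mem_closure_iff_nhds]
    intro t ht
    have h1 : t ∈ F := hm ht
    have h2 : t ∩ s ∈ F := Filter.inter_mem h1 (memF.mpr ⟨s, hs, le_refl _⟩)
    obtain ⟨u, hu, hsub⟩ := memF.mp h2
    obtain ⟨_, q, w, hrepu⟩ := hDCC u hu
    exact ⟨w, hsub (hrepu ▸ self_mem_Cst w q)⟩
  -- conclude φ m = x
  have hzero : φ m - x = 0 := by
    by_contra hc
    have h1 : ({φ m - x}ᶜ : Set X) ∈ nhds (0 : X) :=
      (isClosed_singleton.isOpen_compl).mem_nhds (by simpa using fun h => hc h.symm)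
    obtain ⟨p, hpopen, hpsub⟩ := hbX _ h1
    have : φ ⁻¹' (Cst x p) ∈ D := hC0inD ⟨p, hpopen, rfl⟩
    have h2 : φ m - x ∈ p := hmem _ this
    exact hpsub h2 rfl
  refine ⟨m, ?_⟩
  have : φ m = x := by
    have := sub_eq_zero.mp hzero
    exact this
  exact this
end ClosedRange




section Algebra
variable {A : Type} [Ring A] [Algebra k A]

lemma findim_quot_inf {M : Type} [AddCommGroup M] [Module k M] (p q : Submodule k M)
    [FiniteDimensional k (M ⧸ p)] [FiniteDimensional k (M ⧸ q)] :
    FiniteDimensional k (M ⧸ (p ⊓ q)) := by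
  set f : M →ₗ[k] (M ⧸ p) × (M ⧸ q) := p.mkQ.prod q.mkQ with hf
  have hker : LinearMap.ker f = p ⊓ q := by
    rw [hf, LinearMap.ker_prod, Submodule.ker_mkQ, Submodule.ker_mkQ]
  have hinj : Function.Injective ((p ⊓ q).liftQ f (le_of_eq hker.symm)) := by
    rw [← LinearMap.ker_eq_bot]
    exact Submodule.ker_liftQ_eq_bot _ _ _ (le_of_eq hker)
  exact FiniteDimensional.of_injective _ hinj

lemma submodule_isOpen_of_le {Y : Type} [AddCommGroup Y] [Module k Y] [TopologicalSpace Y]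
    [IsTopologicalAddGroup Y] {p q : Submodule k Y} (h : p ≤ q) (hp : IsOpen (p : Set Y)) :
    IsOpen (q : Set Y) := by
  have : (q : Set Y) = ⋃ w ∈ (q : Set Y), Cst w p := by
    ext x
    simp only [Set.mem_iUnion]
    constructor
    · intro hx; exact ⟨x, hx, self_mem_Cst x p⟩
    · rintro ⟨w, hw, hxw⟩
      have : x = w + (x - w) := by abel
      rw [this]; exact q.add_mem hw (h hxw)
  rw [this]
  exact isOpen_biUnion fun w _ => Cst_isOpen hp

variable [UniformSpace A] [IsUniformAddGroup A] [IsTopologicalRing A]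

lemma open_of_closed_findim
    (hbasis : ∀ s ∈ nhds (0 : A), ∃ I : Ideal A, IsOpen (I : Set A) ∧
      FiniteDimensional k (A ⧸ I.restrictScalars k) ∧ (I : Set A) ⊆ s)
    (W : Submodule k A) (hWc : IsClosed (W : Set A)) [FiniteDimensional k (A ⧸ W)] :
    IsOpen (W : Set A) := by
  set Dn : Set ℕ := {n | ∃ I : Ideal A, IsOpen (I : Set A) ∧
    FiniteDimensional k (A ⧸ I.restrictScalars k) ∧
    n = Module.finrank k (A ⧸ (W ⊔ I.restrictScalars k))} with hDn
  have hDnne : Dn.Nonempty := by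
    obtain ⟨I, hIo, hIf, _⟩ := hbasis Set.univ Filter.univ_mem
    exact ⟨_, I, hIo, hIf, rfl⟩
  have hDnbdd : BddAbove Dn := by
    refine ⟨Module.finrank k (A ⧸ W), ?_⟩
    rintro n ⟨I, hIo, hIf, rfl⟩
    exact quot_finrank_le_of_le le_sup_left
  obtain ⟨I₀, hI₀o, hI₀f, hd⟩ := Nat.sSup_mem hDnne hDnbdd
  have key : ((W ⊔ I₀.restrictScalars k : Submodule k A) : Set A) ⊆ (W : Set A) := by
    intro x hx
    have : x ∈ closure (W : Set A) := by
      rw [mem_closure_iff_nhds]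
      intro t ht
      have hnb : (fun y => x + y) ⁻¹' t ∈ nhds (0 : A) := by
        have hcont : Continuous (fun y : A => x + y) := continuous_const.add continuous_id
        exact hcont.continuousAt.preimage_mem_nhds (by simpa using ht)
      obtain ⟨I, hIo, hIf, hIsub⟩ := hbasis _ hnb
      haveI := hIf; haveI := hI₀f
      -- W ⊔ (I ⊓ I₀) = W ⊔ I₀
      have hinf : (I ⊓ I₀).restrictScalars k = I.restrictScalars k ⊓ I₀.restrictScalars k := rfl
      haveI : FiniteDimensional k (A ⧸ (I ⊓ I₀).restrictScalars k) := by
        rw [hinf]; exact findim_quot_inf _ _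
      have hle : W ⊔ (I ⊓ I₀).restrictScalars k ≤ W ⊔ I₀.restrictScalars k :=
        sup_le_sup_left (by rw [hinf]; exact inf_le_right) W
      haveI : FiniteDimensional k (A ⧸ (W ⊔ (I ⊓ I₀).restrictScalars k)) :=
        quot_findim_of_le le_sup_left
      have h1 : Module.finrank k (A ⧸ (W ⊔ (I ⊓ I₀).restrictScalars k)) ≤ sSup Dn :=
        le_csSup hDnbdd ⟨I ⊓ I₀, hIo.inter hI₀o, inferInstance, rfl⟩
      have h2 : sSup Dn ≤ Module.finrank k (A ⧸ (W ⊔ (I ⊓ I₀).restrictScalars k)) := by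
        rw [hd]; exact quot_finrank_le_of_le hle
      have heq : W ⊔ (I ⊓ I₀).restrictScalars k = W ⊔ I₀.restrictScalars k :=
        eq_of_le_of_finrank_quot_le hle (by omega)
      -- use it
      have hx' : x ∈ W ⊔ (I ⊓ I₀).restrictScalars k := heq ▸ hx
      rcases Submodule.mem_sup.mp hx' with ⟨w, hw, y, hy, hwy⟩
      refine ⟨w, ?_, hw⟩
      have hyI : -y ∈ I := I.neg_mem ((Submodule.mem_inf.mp hy).1)
      have : w = x + (-y) := by rw [← hwy]; abel
      rw [this]
      exact hIsub hyI
    rwa [hWc.closure_eq] at this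
  have hI₀W : (I₀.restrictScalars k : Set A) ⊆ (W : Set A) :=
    fun z hz => key (Submodule.mem_sup_right hz)
  exact submodule_isOpen_of_le (show I₀.restrictScalars k ≤ W from hI₀W) hI₀o

lemma openJacobson_isClosed : IsClosed ((openJacobson A : Ideal A) : Set A) := by
  have : ((openJacobson A : Ideal A) : Set A) =
      ⋂ I ∈ {I : Ideal A | IsOpen (I : Set A) ∧ I.IsMaximal}, (I : Set A) := by
    ext x
    simp only [Set.mem_iInter, SetLike.mem_coe, openJacobson, Submodule.mem_sInf]
  rw [this]
  exact isClosed_biInter fun I hI =>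
    I.toAddSubgroup.isClosed_of_isOpen hI.1

lemma openJacobson_mul_mem :
    ∀ j ∈ openJacobson A, ∀ a : A, j * a ∈ openJacobson A := by
  intro j hj a
  rw [openJacobson, Submodule.mem_sInf] at hj ⊢
  intro I hI
  by_cases ha : a ∈ I
  · simpa [smul_eq_mul] using I.smul_mem j ha
  · set f : A →ₗ[A] A :=
      { toFun := fun x => x * a
        map_add' := fun x y => add_mul x y a
        map_smul' := fun c x => by simp [smul_eq_mul, mul_assoc] } with hf
    set I' : Ideal A := I.comap f with hI'
    have hI'open : IsOpen (I' : Set A) := by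
      have : (I' : Set A) = (fun x => x * a) ⁻¹' (I : Set A) := rfl
      rw [this]
      exact hI.1.preimage (continuous_id.mul continuous_const)
    have hI'max : I'.IsMaximal := by
      rw [Ideal.isMaximal_def]
      constructor
      · intro h
        have h1 : (1 : A) ∈ I' := h ▸ Submodule.mem_top
        have h2 : (1 : A) * a ∈ I := Submodule.mem_comap.mp h1
        exact ha (by simpa using h2)
      · intro B hB
        obtain ⟨c, hcB, hcI'⟩ := SetLike.exists_of_lt hB
        have hca : c * a ∉ I := hcI'
        have hsup : I ⊔ Submodule.span A {c * a} = ⊤ := by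
          have hcoat := Ideal.isMaximal_def.mp hI.2
          refine hcoat.2 _ (lt_of_le_of_ne le_sup_left ?_)
          intro h
          exact hca (h ▸ Submodule.mem_sup_right (Submodule.mem_span_singleton_self _))
        rw [eq_top_iff]
        intro x _
        have : x * a ∈ I ⊔ Submodule.span A {c * a} := hsup ▸ Submodule.mem_top
        rcases Submodule.mem_sup.mp this with ⟨y, hy, z, hz, hyz⟩
        rcases Submodule.mem_span_singleton.mp hz with ⟨d, hd⟩
        have hxdc : (x - d * c) * a ∈ I := by
          have : (x - d * c) * a = x * a - d * (c * a) := by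
            rw [sub_mul, mul_assoc]
          rw [this, ← hyz, ← hd, smul_eq_mul]
          simpa using hy
        have h1 : x - d * c ∈ B := hB.le hxdc
        have h2 : d * c ∈ B := by simpa [smul_eq_mul] using B.smul_mem d hcB
        simpa using B.add_mem h1 h2
    exact Submodule.mem_comap.mp (hj I' ⟨hI'open, hI'max⟩)
end Algebra

section SpanClosed
variable {A : Type} [Ring A] [Algebra k A] [UniformSpace A] [IsUniformAddGroup A]
  [IsTopologicalRing A]
variable {U : Type} [AddCommGroup U] [Module k U] [Module A U] [IsScalarTower k A U]
  [UniformSpace U] [IsUniformAddGroup U] [ContinuousSMul A U]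

lemma pi_basis (hA : IsPseudocompactAlgebra k A) (n : ℕ) :
    ∀ s ∈ nhds (0 : Fin n → A), ∃ p : Submodule k (Fin n → A),
      IsOpen (p : Set (Fin n → A)) ∧ FiniteDimensional k ((Fin n → A) ⧸ p) ∧
      (p : Set (Fin n → A)) ⊆ s := by
  intro s hs
  rw [nhds_pi] at hs
  obtain ⟨I, hIfin, t, ht, hsub⟩ := Filter.mem_pi.mp hs
  have hch : ∀ i : Fin n, ∃ J : Ideal A, IsOpen (J : Set A) ∧
      FiniteDimensional k (A ⧸ J.restrictScalars k) ∧ (J : Set A) ⊆ t i := by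
    intro i
    obtain ⟨J, _, h2, h3, h4⟩ := hA.basis (t i) (ht i)
    exact ⟨J, h2, h3, h4⟩
  choose J hJo hJf hJs using hch
  set p : Submodule k (Fin n → A) :=
    Submodule.pi Set.univ (fun i => (J i).restrictScalars k) with hp
  have hpcoe : (p : Set (Fin n → A)) = Set.pi Set.univ (fun i => ((J i) : Set A)) := by
    ext x
    constructor
    · intro hx i _
      exact (Submodule.mem_pi.mp hx) i (Set.mem_univ i)
    · intro hx
      exact Submodule.mem_pi.mpr (fun i _ => hx i (Set.mem_univ i))
  refine ⟨p, ?_, ?_, ?_⟩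
  · rw [hpcoe]
    exact isOpen_set_pi Set.finite_univ (fun i _ => hJo i)
  · haveI := fun i => hJf i
    set f : (Fin n → A) →ₗ[k] (∀ i : Fin n, A ⧸ (J i).restrictScalars k) :=
      LinearMap.pi (fun i => ((J i).restrictScalars k).mkQ.comp (LinearMap.proj i)) with hf
    have hker : LinearMap.ker f = p := by
      ext x
      constructor
      · intro hx
        refine Submodule.mem_pi.mpr (fun i _ => ?_)
        have h1 := congrFun (LinearMap.mem_ker.mp hx) i
        have h2 : ((J i).restrictScalars k).mkQ (x i) = 0 := h1
        simpa [Submodule.Quotient.mk_eq_zero] using h2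
      · intro hx
        rw [LinearMap.mem_ker]
        funext i
        have h2 : x i ∈ (J i).restrictScalars k := Submodule.mem_pi.mp hx i (Set.mem_univ i)
        simpa [hf, Submodule.Quotient.mk_eq_zero] using h2
    have hinj : Function.Injective (p.liftQ f (le_of_eq hker.symm)) := by
      rw [← LinearMap.ker_eq_bot]
      exact Submodule.ker_liftQ_eq_bot _ _ _ (le_of_eq hker)
    exact FiniteDimensional.of_injective _ hinj
  · refine fun x hx => hsub ?_
    intro i hi
    exact hJs i (by rw [hpcoe] at hx; exact hx i (Set.mem_univ i))

lemma span_finset_isClosed (hA : IsPseudocompactAlgebra k A)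
    (hU : IsPseudocompactModule k A U) (T : Finset U) :
    IsClosed ((Submodule.span A (T : Set U) : Submodule A U) : Set U) := by
  classical
  set n := T.card with hn
  set v : Fin n → U := fun i => ((T.equivFin.symm i : T) : U) with hv
  have hrange : Set.range v = (T : Set U) := by
    ext x
    constructor
    · rintro ⟨i, rfl⟩; exact (T.equivFin.symm i).2
    · intro hx; exact ⟨T.equivFin ⟨x, hx⟩, by simp [hv]⟩
  haveI := hA.complete
  haveI := hU.t2
  set φ : (Fin n → A) →ₗ[k] U :=
    { toFun := fun a => ∑ i, a i • v i
      map_add' := by intro a b; simp [add_smul, Finset.sum_add_distrib]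
      map_smul' := by intro c a; simp [smul_assoc, Finset.smul_sum] } with hφ
  have hcont : Continuous φ := by
    have : Continuous (fun a : Fin n → A => ∑ i, a i • v i) :=
      continuous_finset_sum _ (fun i _ => (continuous_apply i).smul continuous_const)
    exact this
  have hrangeφ : Set.range φ = ((Submodule.span A (T : Set U)) : Set U) := by
    ext x
    rw [← hrange]
    simp only [SetLike.mem_coe]
    rw [mem_span_range_iff_exists_fun]
    constructor
    · rintro ⟨c, rfl⟩; exact ⟨c, rfl⟩
    · rintro ⟨c, hc⟩; exact ⟨c, hc⟩
  rw [← hrangeφ]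
  refine closed_range_of_pc inferInstance (pi_basis hA n) ?_ hU.t2 φ hcont
  intro s hs
  obtain ⟨p, h1, _, h3⟩ := hU.basis s hs
  exact ⟨p.restrictScalars k, h1, h3⟩
end SpanClosed

section Nakayama
variable {A : Type} [Ring A] [Algebra k A] [UniformSpace A] [IsUniformAddGroup A]
  [IsTopologicalRing A]

lemma jpow_two_eq : Jpow k A 2 = Jrad k A * Jrad k A := rfl

lemma jpow_le_jrad : Jpow k A 2 ≤ Jrad k A := by
  rw [jpow_two_eq]
  refine Submodule.mul_le.mpr (fun m hm n hn => ?_)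
  rw [Jrad, Submodule.restrictScalars_mem] at hn ⊢
  show m * n ∈ openJacobson A
  have : m * n = m • n := rfl
  rw [this]
  exact (openJacobson A).smul_mem m hn

lemma nakayama_step (hA : IsPseudocompactAlgebra k A)
    (hfdJ : FiniteDimensional k (A ⧸ Jrad k A))
    (hJopen : IsOpen ((openJacobson A : Ideal A) : Set A))
    (W : Ideal A) (hWc : IsClosed ((W : Ideal A) : Set A))
    (hle : W.restrictScalars k ≤ Jrad k A)
    (hsup : W.restrictScalars k ⊔ Jpow k A 2 = Jrad k A) :
    W.restrictScalars k = Jrad k A := by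
  haveI := hfdJ
  by_contra hne
  obtain ⟨j₀, hj₀J, hj₀W⟩ := SetLike.exists_of_lt (lt_of_le_of_ne hle hne)
  have hj₀W' : j₀ ∉ W := hj₀W
  have hj₀J' : j₀ ∈ openJacobson A := hj₀J
  -- find a basic open two-sided ideal avoiding j₀ + V from W
  have hnb : (fun y => j₀ + y) ⁻¹' ((W : Set A)ᶜ) ∈ nhds (0 : A) := by
    have hcont : Continuous (fun y : A => j₀ + y) := continuous_const.add continuous_id
    exact hcont.continuousAt.preimage_mem_nhds
      (hWc.isOpen_compl.mem_nhds (by simpa using hj₀W'))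
  obtain ⟨V, hV2, hVopen, hVfd, hVs⟩ := hA.basis _ hnb
  have hj₀V : ∀ v ∈ V, j₀ + v ∉ W := fun v hv => hVs hv
  haveI := hVfd
  set P : Ideal A := W ⊔ (V ⊓ openJacobson A) with hP
  have hVJopen : IsOpen ((V ⊓ openJacobson A : Ideal A) : Set A) := by
    have : ((V ⊓ openJacobson A : Ideal A) : Set A) = (V : Set A) ∩ (openJacobson A : Set A) :=
      rfl
    rw [this]; exact hVopen.inter hJopen
  have hPopen : IsOpen ((P : Ideal A) : Set A) :=
    submodule_isOpen_of_le (p := (V ⊓ openJacobson A).restrictScalars k)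
      (q := P.restrictScalars k) (fun x hx => Submodule.mem_sup_right hx) hVJopen
  have hPJ : P ≤ openJacobson A := by
    refine sup_le (fun x hx => hle hx) inf_le_right
  have hj₀P : j₀ ∉ P := by
    intro h
    rcases Submodule.mem_sup.mp h with ⟨w, hw, v, hv, hwv⟩
    have hvV : -v ∈ V := V.neg_mem (Submodule.mem_inf.mp hv).1
    have : j₀ + (-v) = w := by rw [← hwv]; abel
    exact hj₀V _ hvV (this ▸ hw)
  haveI hfdP : FiniteDimensional k (A ⧸ P.restrictScalars k) := by
    have h1 : (V ⊓ openJacobson A).restrictScalars k =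
        V.restrictScalars k ⊓ Jrad k A := rfl
    haveI : FiniteDimensional k (A ⧸ (V ⊓ openJacobson A).restrictScalars k) := by
      rw [h1]; exact findim_quot_inf _ _
    exact quot_findim_of_le
      (show (V ⊓ openJacobson A).restrictScalars k ≤ P.restrictScalars k from
        fun x hx => Submodule.mem_sup_right hx)
  -- pick an ideal C with P ≤ C < J of minimal codimension
  set Sset : Set ℕ := {n | ∃ B : Ideal A, P ≤ B ∧ B ≤ openJacobson A ∧ B ≠ openJacobson A ∧
    n = Module.finrank k (A ⧸ B.restrictScalars k)} with hSset
  have hSne : Sset.Nonempty := by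
    refine ⟨_, P, le_refl _, hPJ, ?_, rfl⟩
    intro h
    exact hj₀P (h ▸ hj₀J')
  obtain ⟨C, hPC, hCJ, hCne, hνC⟩ := Nat.sInf_mem hSne
  haveI hfdC : FiniteDimensional k (A ⧸ C.restrictScalars k) :=
    quot_findim_of_le (show P.restrictScalars k ≤ C.restrictScalars k from hPC)
  have hcoatom : ∀ B : Ideal A, C < B → B ≤ openJacobson A → B = openJacobson A := by
    intro B hCB hBJ
    by_contra hBne
    have hlt : Module.finrank k (A ⧸ B.restrictScalars k) <
        Module.finrank k (A ⧸ C.restrictScalars k) := by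
      have hle' : C.restrictScalars k ≤ B.restrictScalars k := le_of_lt hCB
      have h1 : Module.finrank k (A ⧸ B.restrictScalars k) ≤
          Module.finrank k (A ⧸ C.restrictScalars k) := quot_finrank_le_of_le hle'
      rcases lt_or_eq_of_le h1 with h | h
      · exact h
      · exfalso
        have := eq_of_le_of_finrank_quot_le hle' (le_of_eq h.symm)
        exact (ne_of_lt hCB) (Submodule.restrictScalars_injective k A A this)
    have hmem : Module.finrank k (A ⧸ B.restrictScalars k) ∈ Sset :=
      ⟨B, le_trans hPC (le_of_lt hCB), hBJ, hBne, rfl⟩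
    have := Nat.sInf_le hmem
    omega
  -- key multiplication property
  have key : ∀ b ∈ openJacobson A, ∀ a ∈ openJacobson A, a * b ∈ C := by
    intro b hb a ha
    by_cases hbC : b ∈ C
    · simpa [smul_eq_mul] using C.smul_mem a hbC
    · set f : A →ₗ[A] A :=
        { toFun := fun x => x * b
          map_add' := fun x y => add_mul x y b
          map_smul' := fun c x => by simp [smul_eq_mul, mul_assoc] } with hf
      set Ib : Ideal A := Submodule.comap f C with hIb
      have hVJIb : (V ⊓ openJacobson A : Ideal A) ≤ Ib := by
        intro x hx
        have hx1 : x * b ∈ V := hV2 x (Submodule.mem_inf.mp hx).1 b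
        have hx2 : x * b ∈ openJacobson A :=
          openJacobson_mul_mem x (Submodule.mem_inf.mp hx).2 b
        exact Submodule.mem_comap.mpr
          (hPC (Submodule.mem_sup_right (Submodule.mem_inf.mpr ⟨hx1, hx2⟩)))
      have hIbopen : IsOpen ((Ib : Ideal A) : Set A) :=
        submodule_isOpen_of_le (p := (V ⊓ openJacobson A).restrictScalars k)
          (q := Ib.restrictScalars k) (fun x hx => hVJIb hx) hVJopen
      have hIbmax : Ib.IsMaximal := by
        rw [Ideal.isMaximal_def]
        constructor
        · intro h
          have h1 : (1 : A) ∈ Ib := h ▸ Submodule.mem_top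
          have h2 : (1 : A) * b ∈ C := Submodule.mem_comap.mp h1
          exact hbC (by simpa using h2)
        · intro B hB
          obtain ⟨c, hcB, hcIb⟩ := SetLike.exists_of_lt hB
          have hcb : c * b ∉ C := fun h => hcIb (Submodule.mem_comap.mpr h)
          have hcbJ : c * b ∈ openJacobson A := by
            simpa [smul_eq_mul] using (openJacobson A).smul_mem c hb
          have hCsup : C ⊔ Submodule.span A {c * b} = openJacobson A := by
            refine hcoatom _ (lt_of_le_of_ne le_sup_left ?_)
              (sup_le hCJ ((Submodule.span_le).mpr (by simpa using hcbJ)))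
            intro h
            exact hcb (h ▸ Submodule.mem_sup_right (Submodule.mem_span_singleton_self _))
          rw [eq_top_iff]
          intro x _
          have hxb : x * b ∈ openJacobson A := by
            simpa [smul_eq_mul] using (openJacobson A).smul_mem x hb
          have : x * b ∈ C ⊔ Submodule.span A {c * b} := hCsup ▸ hxb
          rcases Submodule.mem_sup.mp this with ⟨y, hy, z, hz, hyz⟩
          rcases Submodule.mem_span_singleton.mp hz with ⟨d, hd⟩
          have hxdc : (x - d * c) * b ∈ C := by
            have heq : (x - d * c) * b = x * b - d * (c * b) := by
              rw [sub_mul, mul_assoc]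
            rw [heq, ← hyz, ← hd, smul_eq_mul]
            simpa using hy
          have h1 : x - d * c ∈ B := hB.le (Submodule.mem_comap.mpr hxdc)
          have h2 : d * c ∈ B := by simpa [smul_eq_mul] using B.smul_mem d hcB
          simpa using B.add_mem h1 h2
      have haIb : a ∈ Ib := by
        rw [openJacobson, Submodule.mem_sInf] at ha
        exact ha Ib ⟨hIbopen, hIbmax⟩
      exact Submodule.mem_comap.mp haIb
  -- conclude
  have hJ2C : Jpow k A 2 ≤ C.restrictScalars k := by
    rw [jpow_two_eq]
    exact Submodule.mul_le.mpr (fun m hm n hn => key n hn m hm)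
  have hJC : Jrad k A ≤ C.restrictScalars k := by
    rw [← hsup]
    exact sup_le (fun x hx => hPC (Submodule.mem_sup_left hx)) hJ2C
  have : C = openJacobson A :=
    le_antisymm hCJ (fun x hx => hJC hx)
  exact hCne this
end Nakayama

section Main
variable {A : Type} [Ring A] [Algebra k A] [UniformSpace A] [IsUniformAddGroup A]
  [IsTopologicalRing A]

lemma mul_left_mem_jrad_mul {p : Submodule k A} {z : A} (a : A)
    (hz : z ∈ Jrad k A * p) : a * z ∈ Jrad k A * p := by
  refine Submodule.mul_induction_on hz (fun m hm y hy => ?_) (fun x y hx hy => ?_)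
  · rw [← mul_assoc]
    have : a * m = a • m := rfl
    rw [this]
    have hm' : a • m ∈ Jrad k A := by
      rw [Jrad, Submodule.restrictScalars_mem] at hm ⊢
      exact (openJacobson A).smul_mem a hm
    exact Submodule.mul_mem_mul hm' hy
  · rw [mul_add]
    exact Submodule.add_mem _ hx hy

lemma jpow_succ_eq (n : ℕ) (hn : 1 ≤ n) :
    Jpow k A (n + 1) = Jrad k A * Jpow k A n := by
  obtain ⟨m, rfl⟩ : ∃ m, n = m + 1 := ⟨n - 1, by omega⟩
  rfl

theorem main_statement
    (hA : IsPseudocompactAlgebra k A)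
    (hfd : FiniteDimensional k (A ⧸ Jpow k A 2)) :
    (∀ (U : Type) (_ : AddCommGroup U) (_ : Module k U) (_ : Module A U)
        (_ : IsScalarTower k A U) (_ : UniformSpace U) (_ : IsUniformAddGroup U)
        (_ : ContinuousSMul A U),
        IsPseudocompactModule k A U → Module.Finite A U →
        IsClosed ((openJacobson A • (⊤ : Submodule A U) : Submodule A U) : Set U)) ∧
    (∀ n : ℕ, IsClosed ((Jpow k A n : Submodule k A) : Set A) ∧
        ∃ s : Finset A, (Submodule.span A (s : Set A)).restrictScalars k = Jpow k A n) := by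
  classical
  haveI := hfd
  have hAmod : IsPseudocompactModule k A A :=
    ⟨hA.t2, hA.complete, fun s hs => by
      obtain ⟨I, _, h2, h3, h4⟩ := hA.basis s hs
      exact ⟨I, h2, h3, h4⟩⟩
  haveI hfdJ : FiniteDimensional k (A ⧸ Jrad k A) := quot_findim_of_le jpow_le_jrad
  have hJclosed : IsClosed ((openJacobson A : Ideal A) : Set A) := openJacobson_isClosed
  have hJopen : IsOpen ((openJacobson A : Ideal A) : Set A) :=
    open_of_closed_findim (fun s hs => by
      obtain ⟨I, _, h2, h3, h4⟩ := hA.basis s hs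
      exact ⟨I, h2, h3, h4⟩) (Jrad k A) hJclosed
  -- generators of J
  set π := (Jpow k A 2).mkQ with hπ
  set S := (Jrad k A).map π with hS
  obtain ⟨T', hT'⟩ := IsNoetherian.noetherian S
  have hch : ∀ y : A ⧸ Jpow k A 2, ∃ x : A, y ∈ S → x ∈ Jrad k A ∧ π x = y := by
    intro y
    by_cases h : y ∈ S
    · obtain ⟨x, hx, hxy⟩ := Submodule.mem_map.mp h
      exact ⟨x, fun _ => ⟨hx, hxy⟩⟩
    · exact ⟨0, fun hy => absurd hy h⟩
  choose g hg using hch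
  set T : Finset A := T'.image g with hT
  have hT'S : ∀ y ∈ T', y ∈ S := fun y hy => hT' ▸ Submodule.subset_span hy
  have hTJ : (↑T : Set A) ⊆ ((openJacobson A : Ideal A) : Set A) := by
    intro x hx
    rw [hT, Finset.coe_image] at hx
    obtain ⟨y, hy, rfl⟩ := hx
    exact (hg y (hT'S y (by exact_mod_cast hy))).1
  have himg : π '' (↑T : Set A) = (↑T' : Set (A ⧸ Jpow k A 2)) := by
    ext y
    constructor
    · rintro ⟨x, hx, rfl⟩
      rw [hT, Finset.coe_image] at hx
      obtain ⟨y', hy', rfl⟩ := hx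
      rw [(hg y' (hT'S y' (by exact_mod_cast hy'))).2]
      exact_mod_cast hy'
    · intro hy
      exact ⟨g y, by rw [hT, Finset.coe_image]; exact ⟨y, hy, rfl⟩,
        (hg y (hT'S y (by exact_mod_cast hy))).2⟩
  have hspan : Jrad k A ≤ Submodule.span k (↑T : Set A) ⊔ Jpow k A 2 := by
    intro j hj
    have h1 : π j ∈ S := Submodule.mem_map_of_mem hj
    rw [← hT', ← himg, Submodule.span_image] at h1
    obtain ⟨z, hz, hzj⟩ := Submodule.mem_map.mp h1
    have h2 : j - z ∈ Jpow k A 2 := by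
      rw [← Submodule.ker_mkQ (Jpow k A 2)]
      rw [LinearMap.mem_ker, map_sub]
      rw [hπ] at hzj
      rw [hzj]; exact sub_self _
    have h3 : j = z + (j - z) := by abel
    rw [h3]
    exact Submodule.add_mem _ (Submodule.mem_sup_left hz) (Submodule.mem_sup_right h2)
  set WA : Ideal A := Submodule.span A (↑T : Set A) with hWA
  have hWk_le : WA.restrictScalars k ≤ Jrad k A := by
    intro x hx
    rw [Submodule.restrictScalars_mem] at hx
    exact (Submodule.span_le.mpr hTJ) hx
  have hsupW : WA.restrictScalars k ⊔ Jpow k A 2 = Jrad k A := by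
    refine le_antisymm (sup_le hWk_le jpow_le_jrad) (le_trans hspan ?_)
    refine sup_le_sup_right ?_ _
    refine Submodule.span_le.mpr (fun x hx => ?_)
    exact Submodule.subset_span hx
  have hWclosed : IsClosed ((WA : Ideal A) : Set A) := span_finset_isClosed hA hAmod T
  have hJT : WA.restrictScalars k = Jrad k A :=
    nakayama_step hA hfdJ hJopen WA hWclosed hWk_le hsupW
  have hJT' : ∀ j ∈ openJacobson A, j ∈ Submodule.span A (↑T : Set A) := by
    intro j hj
    have : j ∈ Jrad k A := hj
    rw [← hJT] at this
    exact this
  -- the inductive construction of generators of Jpow (n+1)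
  have hstep : ∀ n : ℕ, 1 ≤ n → ∀ s : Finset A,
      (↑s : Set A) ⊆ ((Jpow k A n : Submodule k A) : Set A) →
      (Submodule.span A (↑s : Set A)).restrictScalars k = Jpow k A n →
      ∃ s' : Finset A, (↑s' : Set A) ⊆ ((Jpow k A (n+1) : Submodule k A) : Set A) ∧
        (Submodule.span A (↑s' : Set A)).restrictScalars k = Jpow k A (n+1) := by
    intro n hn s hssub hsspan
    set s' : Finset A := Finset.image (fun p : A × A => p.1 * p.2) (T ×ˢ s) with hs'
    have hs'mem : ∀ x ∈ s', ∃ t ∈ T, ∃ y ∈ s, t * y = x := by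
      intro x hx
      rw [hs', Finset.mem_image] at hx
      obtain ⟨⟨t, y⟩, hty, rfl⟩ := hx
      rw [Finset.mem_product] at hty
      exact ⟨t, hty.1, y, hty.2, rfl⟩
    have hs'sub : (↑s' : Set A) ⊆ ((Jpow k A (n+1) : Submodule k A) : Set A) := by
      intro x hx
      obtain ⟨t, ht, y, hy, rfl⟩ := hs'mem x hx
      rw [jpow_succ_eq n hn]
      exact Submodule.mul_mem_mul (hTJ ht) (hssub hy)
    refine ⟨s', hs'sub, le_antisymm ?_ ?_⟩
    · intro x hx
      rw [Submodule.restrictScalars_mem] at hx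
      refine Submodule.span_induction
        (p := fun z _ => z ∈ Jpow k A (n+1)) ?_ ?_ ?_ ?_ hx
      · intro z hz; exact hs'sub hz
      · exact Submodule.zero_mem _
      · intro a b _ _ ha hb; exact Submodule.add_mem _ ha hb
      · intro a z _ hz
        show a • z ∈ Jpow k A (n+1)
        have h1 : a • z = a * z := rfl
        rw [h1, jpow_succ_eq n hn]
        rw [jpow_succ_eq n hn] at hz
        exact mul_left_mem_jrad_mul a hz
    · rw [jpow_succ_eq n hn]
      refine Submodule.mul_le.mpr (fun j hj z hz => ?_)
      rw [← hsspan, Submodule.restrictScalars_mem] at hz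
      rw [Submodule.restrictScalars_mem]
      have main : ∀ z' (hz' : z' ∈ Submodule.span A (↑s : Set A)),
          ∀ j' ∈ Jrad k A, j' * z' ∈ Submodule.span A (↑s' : Set A) := by
        intro z' hz'
        refine Submodule.span_induction
          (p := fun w _ => ∀ j' ∈ Jrad k A, j' * w ∈ Submodule.span A (↑s' : Set A))
          ?_ ?_ ?_ ?_ hz'
        · intro y hy j' hj'
          have hj'T : j' ∈ Submodule.span A (↑T : Set A) := hJT' j' hj'
          refine Submodule.span_induction
            (p := fun t _ => t * y ∈ Submodule.span A (↑s' : Set A)) ?_ ?_ ?_ ?_ hj'T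
          · intro t ht
            show t * y ∈ Submodule.span A (↑s' : Set A)
            refine Submodule.subset_span ?_
            rw [hs', Finset.coe_image]
            exact ⟨(t, y), by rw [Finset.coe_product]; exact ⟨ht, hy⟩, rfl⟩
          · show (0 : A) * y ∈ Submodule.span A (↑s' : Set A)
            rw [zero_mul]; exact Submodule.zero_mem _
          · intro a b _ _ ha hb
            show (a + b) * y ∈ Submodule.span A (↑s' : Set A)
            rw [add_mul]; exact Submodule.add_mem _ ha hb
          · intro a t _ hty
            show (a • t) * y ∈ Submodule.span A (↑s' : Set A)
            rw [smul_mul_assoc]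
            exact Submodule.smul_mem _ a hty
        · intro j' _
          show j' * 0 ∈ Submodule.span A (↑s' : Set A)
          rw [mul_zero]; exact Submodule.zero_mem _
        · intro a b _ _ ha hb j' hj'
          show j' * (a + b) ∈ Submodule.span A (↑s' : Set A)
          rw [mul_add]; exact Submodule.add_mem _ (ha j' hj') (hb j' hj')
        · intro a w _ hw j' hj'
          show j' * (a • w) ∈ Submodule.span A (↑s' : Set A)
          have h1 : a • w = a * w := rfl
          rw [h1, ← mul_assoc]
          refine hw (j' * a) ?_
          rw [Jrad, Submodule.restrictScalars_mem] at hj' ⊢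
          exact openJacobson_mul_mem j' hj' a
      exact main z hz j hj
  -- generators of Jpow (n+1) for all n
  have hgen : ∀ n : ℕ, ∃ s : Finset A,
      (↑s : Set A) ⊆ ((Jpow k A (n+1) : Submodule k A) : Set A) ∧
      (Submodule.span A (↑s : Set A)).restrictScalars k = Jpow k A (n+1) := by
    intro n
    induction n with
    | zero =>
      refine ⟨T, ?_, ?_⟩
      · exact hTJ
      · exact hJT
    | succ m ih =>
      obtain ⟨s, hs1, hs2⟩ := ih
      exact hstep (m+1) (by omega) s hs1 hs2
  constructor
  · -- part (1)
    intro U iU1 iU2 iU3 iU4 iU5 iU6 iU7 hU hfin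
    letI := iU1; letI := iU2; letI := iU3; letI := iU4
    letI := iU5; letI := iU6; letI := iU7
    obtain ⟨su, hsu⟩ := (Module.Finite.fg_top : (⊤ : Submodule A U).FG)
    set G : Finset U := Finset.image (fun p : A × U => p.1 • p.2) (T ×ˢ su) with hG
    have claim : (openJacobson A • (⊤ : Submodule A U) : Submodule A U) =
        Submodule.span A (↑G : Set U) := by
      refine le_antisymm ?_ ?_
      · refine Submodule.smul_le.mpr (fun j hj u _ => ?_)
        have hu' : u ∈ Submodule.span A (↑su : Set U) := hsu ▸ Submodule.mem_top
        have main : ∀ u' (hu'' : u' ∈ Submodule.span A (↑su : Set U)),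
            ∀ j' ∈ openJacobson A, j' • u' ∈ Submodule.span A (↑G : Set U) := by
          intro u' hu''
          refine Submodule.span_induction
            (p := fun w _ => ∀ j' ∈ openJacobson A, j' • w ∈ Submodule.span A (↑G : Set U))
            ?_ ?_ ?_ ?_ hu''
          · intro y hy j' hj'
            have hj'T : j' ∈ Submodule.span A (↑T : Set A) := hJT' j' hj'
            refine Submodule.span_induction
              (p := fun t _ => t • y ∈ Submodule.span A (↑G : Set U)) ?_ ?_ ?_ ?_ hj'T
            · intro t ht
              show t • y ∈ Submodule.span A (↑G : Set U)
              refine Submodule.subset_span ?_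
              rw [hG, Finset.coe_image]
              exact ⟨(t, y), by rw [Finset.coe_product]; exact ⟨ht, hy⟩, rfl⟩
            · show (0 : A) • y ∈ Submodule.span A (↑G : Set U)
              rw [zero_smul]; exact Submodule.zero_mem _
            · intro a b _ _ ha hb
              show (a + b) • y ∈ Submodule.span A (↑G : Set U)
              rw [add_smul]; exact Submodule.add_mem _ ha hb
            · intro a t _ hty
              show (a • t) • y ∈ Submodule.span A (↑G : Set U)
              have h2 : (a • t) • y = a • (t • y) := by rw [smul_assoc]
              rw [h2]
              exact Submodule.smul_mem _ a hty
          · intro j' _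
            show j' • (0 : U) ∈ Submodule.span A (↑G : Set U)
            rw [smul_zero]; exact Submodule.zero_mem _
          · intro a b _ _ ha hb j' hj'
            show j' • (a + b) ∈ Submodule.span A (↑G : Set U)
            rw [smul_add]; exact Submodule.add_mem _ (ha j' hj') (hb j' hj')
          · intro a w _ hw j' hj'
            show j' • (a • w) ∈ Submodule.span A (↑G : Set U)
            rw [smul_smul]
            exact hw (j' * a) (openJacobson_mul_mem j' hj' a)
        exact main u hu' j hj
      · refine Submodule.span_le.mpr (fun x hx => ?_)
        rw [hG, Finset.coe_image] at hx
        obtain ⟨⟨t, u⟩, htu, rfl⟩ := hx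
        rw [Finset.coe_product] at htu
        exact Submodule.smul_mem_smul (hTJ htu.1) Submodule.mem_top
    rw [claim]
    exact span_finset_isClosed hA hU G
  · -- part (2)
    intro n
    match n with
    | 0 =>
      constructor
      · show IsClosed ((⊤ : Submodule k A) : Set A)
        rw [Submodule.top_coe]; exact isClosed_univ
      · refine ⟨{1}, ?_⟩
        have : Submodule.span A (({1} : Finset A) : Set A) = ⊤ := by
          rw [eq_top_iff]
          intro x _
          rw [Finset.coe_singleton]
          exact Submodule.mem_span_singleton.mpr ⟨x, by simp [smul_eq_mul]⟩
        rw [this]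
        rfl
    | m + 1 =>
      obtain ⟨s, hs1, hs2⟩ := hgen m
      constructor
      · rw [← hs2]
        exact span_finset_isClosed hA hAmod s
      · exact ⟨s, hs2⟩
end Main


/-- Let `A` be a pseudocompact `k`-algebra with `A/J²(A)` finite
dimensional.  Then (1) for every finitely generated pseudocompact `A`-module `U` the
submodule `J(A)·U` is closed in `U`, and (2) for every `n`, `Jⁿ(A)` is a closed,
finitely generated (as an `A`-module, i.e. left ideal) submodule of `A`. -/
theorem JU_closed_and_Jpow_closed_fg
    (k : Type) [Field k] [PerfectField k]
    (A : Type) [Ring A] [Algebra k A] [UniformSpace A] [IsUniformAddGroup A] [IsTopologicalRing A]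
    (hA : IsPseudocompactAlgebra k A)
    (hfd : FiniteDimensional k (A ⧸ Jpow k A 2)) :
    (∀ (U : Type) (_ : AddCommGroup U) (_ : Module k U) (_ : Module A U)
        (_ : IsScalarTower k A U) (_ : UniformSpace U) (_ : IsUniformAddGroup U)
        (_ : ContinuousSMul A U),
        IsPseudocompactModule k A U → Module.Finite A U →
        IsClosed ((openJacobson A • (⊤ : Submodule A U) : Submodule A U) : Set U)) ∧
    (∀ n : ℕ, IsClosed ((Jpow k A n : Submodule k A) : Set A) ∧
        ∃ s : Finset A, (Submodule.span A (s : Set A)).restrictScalars k = Jpow k A n) := by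
  exact main_statement hA hfd
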